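/- Let 1 < p < 2 and 1 < μ < p/(2−p) be real numbers, and let β̃ satisfy 0 < β̃ ≤ min{ (p − μ(2−p))/2 , 2(p−1)·(2−p)^{(2−p)/(2(p−1))}·(μ/p)^{p/(2(p−1))} }. Then there is no real number τ ∈ (0, 1) satisfying simultaneously p·τ^{2p−2} − 2β̃·τ^p = μ(2−p) and μ + β̃·τ^p − β̃·τ^{p−2} − τ^{2p−2} = 0. -/

import Mathlib

/-- Key elementary inequality: for `1 < p < 2` and `0 < u ≤ 1`,
`p·u^{p-1} + (2-p)·u^p ≤ p·u + (2-p)`. -/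
lemma aux_B5 (p : ℝ) (hp1 : 1 < p) (hp2 : p < 2) {u : ℝ} (hu0 : 0 < u) (hu1 : u ≤ 1) :
    p * u ^ (p - 1) + (2 - p) * u ^ p ≤ p * u + (2 - p) := by
  set f : ℝ → ℝ := fun x => p * x + (2 - p) - (p * x ^ (p - 1) + (2 - p) * x ^ p) with hf
  have hderiv : ∀ x : ℝ, 0 < x →
      HasDerivAt f (p - (p * ((p - 1) * x ^ (p - 1 - 1)) + (2 - p) * (p * x ^ (p - 1)))) x := by
    intro x hx
    have h₁ : HasDerivAt (fun x : ℝ => p * x + (2 - p)) (p * 1) x :=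
      ((hasDerivAt_id x).const_mul p).add_const (2 - p)
    have h₂ : HasDerivAt (fun x : ℝ => x ^ (p - 1)) ((p - 1) * x ^ (p - 1 - 1)) x :=
      Real.hasDerivAt_rpow_const (Or.inl hx.ne')
    have h₃ : HasDerivAt (fun x : ℝ => x ^ p) (p * x ^ (p - 1)) x :=
      Real.hasDerivAt_rpow_const (Or.inl hx.ne')
    have := h₁.sub ((h₂.const_mul p).add (h₃.const_mul (2 - p)))
    simp only [mul_one] at this
    exact this
  have hanti : AntitoneOn f (Set.Ioc (0 : ℝ) 1) := by
    apply antitoneOn_of_deriv_nonpos (convex_Ioc 0 1)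
    · intro x hx
      exact (hderiv x hx.1).continuousAt.continuousWithinAt
    · intro x hx
      rw [interior_Ioc] at hx
      exact (hderiv x hx.1).differentiableAt.differentiableWithinAt
    · intro x hx
      rw [interior_Ioc] at hx
      rw [(hderiv x hx.1).deriv]
      have hx0 : (0 : ℝ) < x := hx.1
      have hgm : (x ^ (p - 1 - 1)) ^ (p - 1) * (x ^ (p - 1)) ^ (2 - p) ≤
          (p - 1) * x ^ (p - 1 - 1) + (2 - p) * x ^ (p - 1) :=
        Real.geom_mean_le_arith_mean2_weighted (by linarith) (by linarith)
          (Real.rpow_pos_of_pos hx0 _).le (Real.rpow_pos_of_pos hx0 _).le (by ring)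
      have hone : (x ^ (p - 1 - 1)) ^ (p - 1) * (x ^ (p - 1)) ^ (2 - p) = 1 := by
        rw [← Real.rpow_mul hx0.le, ← Real.rpow_mul hx0.le, ← Real.rpow_add hx0]
        rw [show (p - 1 - 1) * (p - 1) + (p - 1) * (2 - p) = 0 by ring, Real.rpow_zero]
      rw [hone] at hgm
      have h1le : 1 ≤ (p - 1) * x ^ (p - 1 - 1) + (2 - p) * x ^ (p - 1) := hgm
      nlinarith [h1le, hp1, hp2]
  have h01 : (1 : ℝ) ∈ Set.Ioc (0 : ℝ) 1 := by constructor <;> norm_num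
  have hu : u ∈ Set.Ioc (0 : ℝ) 1 := ⟨hu0, hu1⟩
  have := hanti hu h01 hu1
  have hf1 : f 1 = 0 := by simp [hf, Real.one_rpow]
  rw [hf1] at this
  simp only [hf] at this
  linarith

/-- Case (B5): for `1 < p < 2`, `1 < μ < p/(2-p)` and
`0 < β̃ ≤ min{(p - μ(2-p))/2, 2(p-1)(2-p)^{(2-p)/(2(p-1))}(μ/p)^{p/(2(p-1))}}`,
the system `p·τ^{2p-2} - 2β̃·τ^p = μ(2-p)`, `μ + β̃·τ^p - β̃·τ^{p-2} - τ^{2p-2} = 0`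
has no solution `τ ∈ (0, 1)`. -/
theorem no_solution_B5 (p μ β : ℝ) (hp1 : 1 < p) (hp2 : p < 2)
    (hμ1 : 1 < μ) (hμ2 : μ < p / (2 - p)) (hβ0 : 0 < β)
    (hβ : β ≤ min ((p - μ * (2 - p)) / 2)
      (2 * (p - 1) * (2 - p) ^ ((2 - p) / (2 * (p - 1))) * (μ / p) ^ (p / (2 * (p - 1))))) :
    ¬ ∃ τ : ℝ, 0 < τ ∧ τ < 1 ∧
      p * τ ^ (2 * p - 2) - 2 * β * τ ^ p = μ * (2 - p) ∧
      μ + β * τ ^ p - β * τ ^ (p - 2) - τ ^ (2 * p - 2) = 0 := by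
  rintro ⟨τ, hτ0, hτ1, h1, h2⟩
  set t : ℝ := τ * τ with ht
  have ht0 : 0 < t := mul_pos hτ0 hτ0
  have ht1 : t < 1 := by nlinarith
  have ht2 : t = τ ^ (2 : ℝ) := by rw [Real.rpow_two, pow_two, ht]
  -- rewrite the mixed power as a product
  have e2 : τ ^ (2 * p - 2) = τ ^ p * τ ^ (p - 2) := by
    rw [show 2 * p - 2 = p + (p - 2) by ring, Real.rpow_add hτ0]
  have e3 : τ ^ p = τ ^ (p - 2) * t := by
    rw [ht2, ← Real.rpow_add hτ0, show p - 2 + 2 = p by ring]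
  have e1 : t ^ (p - 1) = τ ^ p * τ ^ (p - 2) := by
    rw [ht2, ← Real.rpow_mul hτ0.le, show 2 * (p - 1) = p + (p - 2) by ring,
      Real.rpow_add hτ0]
  have e4 : t ^ p = τ ^ p * τ ^ p := by
    rw [ht2, ← Real.rpow_mul hτ0.le, show 2 * p = p + p by ring, Real.rpow_add hτ0]
  rw [e2] at h1 h2
  -- eliminate β from the system
  have key : p * (τ ^ p * τ ^ (p - 2)) + (2 - p) * (τ ^ p * τ ^ p)
      = μ * (2 - p) + μ * p * t := by
    linear_combination (1 - t) * h1 + (-2 * t) * h2 + (2 * β + (2 - p) * τ ^ p) * e3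
  have hineq := aux_B5 p hp1 hp2 ht0 ht1.le
  rw [e1, e4] at hineq
  -- combine: (μ - 1)(2 - p + p t) ≤ 0, contradiction with μ > 1
  rw [key] at hineq
  nlinarith [mul_pos (mul_pos (by linarith : (0:ℝ) < p) ht0) (by linarith : (0:ℝ) < μ - 1)]
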